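/- Let (Mⁿ, g) be a complete Riemannian manifold with nonnegative Ricci curvature and p ∈ M. Then lim_{τ→∞} ∫_M (4πτ)^{−n/2} exp(−d(x, p)²/(4τ)) dμ(x) = ν(g), where ν(g) = lim_{r→∞} Vol B(p, r)/(ω_n rⁿ) is the asymptotic volume ratio. -/

import Mathlib

open Real Set Metric MeasureTheory Filter

lemma my_lintegral_image_eq_lintegral_abs_deriv_mul {s : Set ℝ} {f f' : ℝ → ℝ}
    (hs : MeasurableSet s) (hf' : ∀ x ∈ s, HasDerivWithinAt f (f' x) s x) (hf : InjOn f s)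
    (g : ℝ → ENNReal) :
    ∫⁻ x in f '' s, g x = ∫⁻ x in s, ENNReal.ofReal |f' x| * g (f x) := by
  simpa only [ContinuousLinearMap.det_toSpanSingleton] using
    lintegral_image_eq_lintegral_abs_det_fderiv_mul volume hs
      (fun x hx => (hf' x hx).hasFDerivWithinAt) hf g

lemma phi_hasDerivAt {τ : ℝ} (hτ : 0 < τ) (u : ℝ) :
    HasDerivAt (fun s : ℝ => Real.exp (-s^2/(4*τ)))
      (Real.exp (-u^2/(4*τ)) * (-(2*u)/(4*τ))) u := by
  have h1 : HasDerivAt (fun s : ℝ => -s^2/(4*τ)) (-(2*u)/(4*τ)) u := by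
    have := (hasDerivAt_pow 2 u).neg.div_const (4*τ)
    simpa using this
  simpa using h1.exp

lemma phi_injOn {τ : ℝ} (hτ : 0 < τ) :
    InjOn (fun s : ℝ => Real.exp (-s^2/(4*τ))) (Ioi 0) := by
  intro a ha b hb hab
  simp only [Real.exp_eq_exp] at hab
  have h4 : (4*τ) ≠ 0 := by positivity
  have : a^2 = b^2 := by
    field_simp at hab
    linarith
  nlinarith [mem_Ioi.mp ha, mem_Ioi.mp hb]

lemma phi_image {τ : ℝ} (hτ : 0 < τ) :
    (fun s : ℝ => Real.exp (-s^2/(4*τ))) '' (Ioi 0) = Ioo 0 1 := by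
  ext t
  constructor
  · rintro ⟨u, hu, rfl⟩
    refine ⟨Real.exp_pos _, ?_⟩
    have : -u^2/(4*τ) < 0 := by
      have : (0:ℝ) < u^2 := pow_pos hu 2
      have h4 : (0:ℝ) < 4*τ := by positivity
      exact div_neg_of_neg_of_pos (by linarith) h4
    simpa using Real.exp_lt_one_iff.mpr this
  · rintro ⟨ht0, ht1⟩
    refine ⟨Real.sqrt (4*τ * (-Real.log t)), ?_, ?_⟩
    · have hlog : Real.log t < 0 := Real.log_neg ht0 ht1
      have : (0:ℝ) < 4*τ*(-Real.log t) := by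
        have : 0 < -Real.log t := by linarith
        positivity
      exact Real.sqrt_pos.mpr this
    · have hX : (0:ℝ) ≤ 4*τ*(-Real.log t) := by
        have hlog : Real.log t < 0 := Real.log_neg ht0 ht1
        nlinarith
      simp only
      rw [Real.sq_sqrt hX]
      have h4 : (4*τ) ≠ 0 := by positivity
      rw [show -(4*τ*(-Real.log t))/(4*τ) = Real.log t by field_simp]
      exact Real.exp_log ht0

lemma key_identity {M : Type*} [MetricSpace M] [MeasurableSpace M] [BorelSpace M]
    (μ : Measure M) (p : M) {τ : ℝ} (hτ : 0 < τ) :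
    ∫⁻ x, ENNReal.ofReal (Real.exp (-(dist x p)^2/(4*τ))) ∂μ
      = ∫⁻ u in Ioi 0,
          ENNReal.ofReal ((u/(2*τ)) * Real.exp (-u^2/(4*τ))) * μ (ball p u) := by
  have hmble : Measurable (fun x : M => Real.exp (-(dist x p)^2/(4*τ))) := by
    have : Continuous (fun x : M => Real.exp (-(dist x p)^2/(4*τ))) := by
      continuity
    exact this.measurable
  rw [MeasureTheory.lintegral_eq_lintegral_meas_lt μ
    (Filter.Eventually.of_forall (fun x => (Real.exp_pos _).le)) hmble.aemeasurable]
  have hsplit : Ioo (0:ℝ) 1 ∪ Ici (1:ℝ) = Ioi 0 := Ioo_union_Ici_eq_Ioi zero_lt_one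
  have hdisj : Disjoint (Ioo (0:ℝ) 1) (Ici (1:ℝ)) := by
    rw [Set.disjoint_left]
    intro x hx hx'
    exact absurd hx.2 (not_lt.mpr hx')
  have hzero : ∫⁻ t in Ici (1:ℝ), μ {a : M | t < Real.exp (-(dist a p)^2/(4*τ))} = 0 := by
    rw [MeasureTheory.setLIntegral_congr_fun measurableSet_Ici
      (fun t (ht : 1 ≤ t) => ?_), lintegral_zero]
    have : {a : M | t < Real.exp (-(dist a p)^2/(4*τ))} = ∅ := by
      ext a
      simp only [mem_setOf_eq, mem_empty_iff_false, iff_false, not_lt]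
      have h1 : Real.exp (-(dist a p)^2/(4*τ)) ≤ 1 := by
        rw [← Real.exp_zero]
        apply Real.exp_le_exp.mpr
        have : (0:ℝ) ≤ (dist a p)^2 := sq_nonneg _
        have h4 : (0:ℝ) < 4*τ := by positivity
        rw [div_le_iff₀ h4]
        nlinarith
      linarith
    rw [this, measure_empty]
  have hstep : ∫⁻ t in Ioi (0:ℝ), μ {a : M | t < Real.exp (-(dist a p)^2/(4*τ))}
      = ∫⁻ t in Ioo (0:ℝ) 1, μ {a : M | t < Real.exp (-(dist a p)^2/(4*τ))} := by
    rw [← hsplit, MeasureTheory.lintegral_union measurableSet_Ici hdisj, hzero, add_zero]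
  rw [hstep, ← phi_image hτ,
    my_lintegral_image_eq_lintegral_abs_deriv_mul measurableSet_Ioi
      (fun u _ => (phi_hasDerivAt hτ u).hasDerivWithinAt) (phi_injOn hτ)]
  apply MeasureTheory.setLIntegral_congr_fun measurableSet_Ioi
  intro u (hu : 0 < u)
  have hset : {a : M | Real.exp (-u^2/(4*τ)) < Real.exp (-(dist a p)^2/(4*τ))} = ball p u := by
    ext a
    simp only [mem_setOf_eq, mem_ball, Real.exp_lt_exp]
    have h4 : (0:ℝ) < 4*τ := by positivity
    have hd : (0:ℝ) ≤ dist a p := dist_nonneg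
    rw [div_lt_div_iff_of_pos_right h4]
    constructor
    · intro h; nlinarith
    · intro h; nlinarith
  have habs : |Real.exp (-u^2/(4*τ)) * (-(2*u)/(4*τ))| = (u/(2*τ)) * Real.exp (-u^2/(4*τ)) := by
    rw [abs_mul, abs_of_pos (Real.exp_pos _), abs_div, abs_neg]
    rw [abs_of_nonneg (by positivity : (0:ℝ) ≤ 2*u), abs_of_nonneg (by positivity : (0:ℝ) ≤ 4*τ)]
    field_simp
    ring
  beta_reduce
  rw [hset, habs]

lemma bochner_identity {M : Type*} [MetricSpace M] [MeasurableSpace M] [BorelSpace M]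
    (μ : Measure M) (p : M) {τ : ℝ} (hτ : 0 < τ)
    (hfin : ∀ r : ℝ, μ (ball p r) ≠ ⊤)
    {ω : ℝ} (hω0 : 0 < ω) (n : ℕ)
    (hbound : ∀ u : ℝ, 0 < u → (μ (ball p u)).toReal ≤ ω * u^n) :
    ∫ x, Real.exp (-(dist x p)^2/(4*τ)) ∂μ
      = ∫ u in Ioi (0:ℝ),
          (μ (ball p u)).toReal * ((u/(2*τ)) * Real.exp (-u^2/(4*τ))) := by
  set F : ℝ → ℝ := fun u => (μ (ball p u)).toReal with hF
  have hFmono : Monotone F := fun a b hab =>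
    ENNReal.toReal_mono (hfin b) (measure_mono (ball_subset_ball hab))
  have hFmeas : Measurable F := hFmono.measurable
  have hFnn : ∀ u, 0 ≤ F u := fun u => ENNReal.toReal_nonneg
  set G : ℝ → ℝ := fun u => F u * ((u/(2*τ)) * Real.exp (-u^2/(4*τ))) with hG
  have hGmeas : Measurable G := by
    apply hFmeas.mul
    have : Continuous fun u : ℝ => (u/(2*τ)) * Real.exp (-u^2/(4*τ)) := by continuity
    exact this.measurable
  have hGnn : ∀ u ∈ Ioi (0:ℝ), 0 ≤ G u := by
    intro u (hu : 0 < u)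
    apply mul_nonneg (hFnn u)
    positivity
  have hGint : IntegrableOn G (Ioi 0) := by
    have hb : (0:ℝ) < 1/(4*τ) := by positivity
    have hs : (-1:ℝ) < (n:ℝ) + 1 := by
      have : (0:ℝ) ≤ (n:ℝ) := Nat.cast_nonneg n
      linarith
    have hint := (integrableOn_rpow_mul_exp_neg_mul_sq hb hs).const_mul (ω/(2*τ))
    apply hint.mono' (hGmeas.aestronglyMeasurable.restrict)
    filter_upwards [ae_restrict_mem measurableSet_Ioi] with u (hu : 0 < u)
    rw [Real.norm_of_nonneg (hGnn u hu)]
    have h1 : u ^ ((n:ℝ)+1) = u ^ (n+1) := by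
      rw [show ((n:ℝ)+1) = ((n+1 : ℕ) : ℝ) by push_cast; ring, Real.rpow_natCast]
    have h2 : Real.exp (-(1/(4*τ)) * u^2) = Real.exp (-u^2/(4*τ)) := by
      congr 1; field_simp
    calc G u ≤ (ω * u^n) * ((u/(2*τ)) * Real.exp (-u^2/(4*τ))) := by
          apply mul_le_mul_of_nonneg_right (hbound u hu)
          positivity
      _ = ω/(2*τ) * (u ^ ((n:ℝ)+1) * Real.exp (-(1/(4*τ)) * u^2)) := by
          rw [h1, h2]; ring
  have hexp_nn : 0 ≤ᵐ[μ] fun x : M => Real.exp (-(dist x p)^2/(4*τ)) :=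
    Filter.Eventually.of_forall (fun x => (Real.exp_pos _).le)
  have hexp_meas : AEStronglyMeasurable (fun x : M => Real.exp (-(dist x p)^2/(4*τ))) μ := by
    have : Continuous (fun x : M => Real.exp (-(dist x p)^2/(4*τ))) := by continuity
    exact this.aestronglyMeasurable
  rw [MeasureTheory.integral_eq_lintegral_of_nonneg_ae hexp_nn hexp_meas, key_identity μ p hτ]
  have hcongr : ∫⁻ u in Ioi (0:ℝ),
      ENNReal.ofReal ((u/(2*τ)) * Real.exp (-u^2/(4*τ))) * μ (ball p u)
      = ∫⁻ u in Ioi (0:ℝ), ENNReal.ofReal (G u) := by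
    apply MeasureTheory.setLIntegral_congr_fun measurableSet_Ioi
    intro u (hu : 0 < u)
    beta_reduce
    rw [← ENNReal.ofReal_toReal (hfin u), ← ENNReal.ofReal_mul (by positivity)]
    congr 1
    simp only [hG, hF]
    ring
  rw [hcongr, ← MeasureTheory.ofReal_integral_eq_lintegral_ofReal hGint
    ((ae_restrict_mem measurableSet_Ioi).mono hGnn),
    ENNReal.toReal_ofReal (setIntegral_nonneg measurableSet_Ioi hGnn)]

lemma const_helper (n : ℕ) {τ : ℝ} (hτ : 0 < τ) :
    (4*π*τ) ^ (-(n:ℝ)/2) * (Real.sqrt τ)^n = (4*π) ^ (-(n:ℝ)/2) := by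
  have h4π : (0:ℝ) < 4*π := by positivity
  have hsqrt : (Real.sqrt τ)^n = τ ^ ((n:ℝ)/2) := by
    rw [Real.sqrt_eq_rpow, ← Real.rpow_natCast (τ ^ ((1:ℝ)/2)) n, ← Real.rpow_mul hτ.le]
    congr 1
    ring
  rw [Real.mul_rpow h4π.le hτ.le, hsqrt, mul_assoc, ← Real.rpow_add hτ,
    show -(n:ℝ)/2 + (n:ℝ)/2 = 0 by ring, Real.rpow_zero, mul_one]

lemma rescaled_identity {M : Type*} [MetricSpace M] [MeasurableSpace M] [BorelSpace M]
    (μ : Measure M) (p : M) {τ : ℝ} (hτ : 0 < τ)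
    (hfin : ∀ r : ℝ, μ (ball p r) ≠ ⊤)
    {ω : ℝ} (hω0 : 0 < ω) (n : ℕ)
    (hbound : ∀ u : ℝ, 0 < u → (μ (ball p u)).toReal ≤ ω * u^n) :
    (4*π*τ) ^ (-(n:ℝ)/2) * ∫ x, Real.exp (-(dist x p)^2/(4*τ)) ∂μ
      = ∫ v in Ioi (0:ℝ),
          ((μ (ball p (2*Real.sqrt τ*v))).toReal / (ω * (2*Real.sqrt τ*v)^n))
            * ((2^(n+1) * ω * (4*π) ^ (-(n:ℝ)/2)) * (v^(n+1) * Real.exp (-v^2))) := by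
  rw [bochner_identity μ p hτ hfin hω0 n hbound]
  have hsq : 0 < Real.sqrt τ := Real.sqrt_pos.mpr hτ
  have hb : (0:ℝ) < 2*Real.sqrt τ := by positivity
  set g : ℝ → ℝ := fun u => (μ (ball p u)).toReal * ((u/(2*τ)) * Real.exp (-u^2/(4*τ)))
    with hgdef
  have hsub := integral_comp_mul_left_Ioi g 0 hb
  rw [mul_zero] at hsub
  have hstep : ∫ u in Ioi (0:ℝ), g u
      = (2*Real.sqrt τ) * ∫ v in Ioi (0:ℝ), g ((2*Real.sqrt τ)*v) := by
    rw [hsub, smul_eq_mul, ← mul_assoc, mul_inv_cancel₀ (ne_of_gt hb), one_mul]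
  rw [hstep, ← mul_assoc, ← MeasureTheory.integral_const_mul]
  apply setIntegral_congr_fun measurableSet_Ioi
  intro v (hv : 0 < v)
  simp only [hgdef]
  have hττ : Real.sqrt τ * Real.sqrt τ = τ := Real.mul_self_sqrt hτ.le
  have hexp : Real.exp (-(2*Real.sqrt τ*v)^2/(4*τ)) = Real.exp (-v^2) := by
    congr 1
    have : (2*Real.sqrt τ*v)^2 = 4*τ*v^2 := by
      nlinarith [hττ]
    rw [this]
    field_simp
  have hbvn : (2*Real.sqrt τ*v)^n = 2^n * (Real.sqrt τ)^n * v^n := by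
    rw [mul_pow, mul_pow]
  have hωbvn : ω * (2*Real.sqrt τ*v)^n ≠ 0 := by positivity
  have hFv : (μ (ball p (2*Real.sqrt τ*v))).toReal
      = ((μ (ball p (2*Real.sqrt τ*v))).toReal / (ω * (2*Real.sqrt τ*v)^n))
          * (ω * (2*Real.sqrt τ*v)^n) := (div_mul_cancel₀ _ hωbvn).symm
  rw [hexp]
  rw [hFv]
  have hch := const_helper n hτ
  set V := (μ (ball p (2*Real.sqrt τ*v))).toReal / (ω * (2*Real.sqrt τ*v)^n) with hV
  set cτ := (4*π*τ) ^ (-(n:ℝ)/2) with hcτ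
  rw [← hch, hbvn]
  have hdiv : 2*Real.sqrt τ*v/(2*τ) = v/(Real.sqrt τ) := by
    rw [div_eq_div_iff (by positivity) (ne_of_gt hsq)]
    nlinarith [hττ]
  rw [hdiv]
  field_simp
  ring

lemma gamma_value (n : ℕ) :
    ∫ v in Ioi (0:ℝ), v^(n+1) * Real.exp (-v^2) = (1/2) * Real.Gamma ((n:ℝ)/2 + 1) := by
  have h := integral_rpow_mul_exp_neg_rpow (p := 2) (q := (n:ℝ)+1) (by norm_num)
    (by have : (0:ℝ) ≤ (n:ℝ) := Nat.cast_nonneg n; linarith)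
  rw [show (((n:ℝ)+1)+1)/2 = (n:ℝ)/2 + 1 by ring] at h
  rw [← h]
  apply setIntegral_congr_fun measurableSet_Ioi
  intro v (hv : 0 < v)
  show v^(n+1) * Real.exp (-v^2) = v ^ ((n:ℝ)+1) * Real.exp (-v ^ (2:ℝ))
  rw [show ((n:ℝ)+1) = ((n+1 : ℕ) : ℝ) by push_cast; ring, Real.rpow_natCast]
  congr 2
  rw [show (2:ℝ) = ((2:ℕ):ℝ) by norm_num, Real.rpow_natCast]

lemma const_value (n : ℕ) {ω : ℝ} (hωpos : 0 < ω)
    (hω : ω = π ^ ((n:ℝ)/2) / Real.Gamma ((n:ℝ)/2 + 1)) :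
    (2:ℝ)^(n+1) * ω * (4*π) ^ (-(n:ℝ)/2) * ((1/2) * Real.Gamma ((n:ℝ)/2+1)) = 1 := by
  have hπ : 0 < π := Real.pi_pos
  have hΓ : 0 < Real.Gamma ((n:ℝ)/2 + 1) := Real.Gamma_pos_of_pos (by positivity)
  have h4π : (4*π) ^ (-(n:ℝ)/2) = ((2:ℝ)^n * π ^ ((n:ℝ)/2))⁻¹ := by
    rw [show -(n:ℝ)/2 = -((n:ℝ)/2) by ring, Real.rpow_neg (by positivity)]
    congr 1
    rw [Real.mul_rpow (by norm_num) hπ.le]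
    congr 1
    rw [show (4:ℝ) = 2^(2:ℕ) by norm_num, ← Real.rpow_natCast (2:ℝ) 2,
      ← Real.rpow_mul (by norm_num : (0:ℝ) ≤ 2),
      show ((2:ℕ):ℝ) * ((n:ℝ)/2) = ((n:ℕ):ℝ) by push_cast; ring, Real.rpow_natCast]
  have hπn : 0 < π ^ ((n:ℝ)/2) := Real.rpow_pos_of_pos hπ _
  rw [hω, h4π]
  field_simp
  ring

/-- Static analogue of the main theorem: on a complete manifold of nonnegative Ricci curvature
(encoded via the Bishop–Gromov volume-comparison package, since Mathlib has no Ricci tensor),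
`lim_{τ→∞} ∫_M (4πτ)^{−n/2} exp(−d(x,p)²/(4τ)) dμ(x) = ν(g)`, the asymptotic volume ratio. -/
theorem stmt8 {M : Type*} [MetricSpace M] [CompleteSpace M] [MeasurableSpace M] [BorelSpace M]
    (n : ℕ) (hn : 1 ≤ n) (μ : Measure M)
    (ω : ℝ) (hω : ω = π ^ ((n:ℝ)/2) / Real.Gamma ((n:ℝ)/2 + 1))
    (hRicciNonnegBG : ∀ p : M,
      AntitoneOn (fun r => (μ (ball p r)).toReal / (ω * r^n)) (Ioi 0))
    (hsmallScale : ∀ p : M,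
      Tendsto (fun r => (μ (ball p r)).toReal / (ω * r^n)) (nhdsWithin 0 (Ioi 0)) (nhds 1))
    (p : M) (ν : ℝ)
    (hν : Tendsto (fun r => (μ (ball p r)).toReal / (ω * r^n)) atTop (nhds ν)) :
    Tendsto (fun τ : ℝ => ∫ x, (4 * π * τ) ^ (-(n:ℝ)/2) * Real.exp (-(dist x p)^2 / (4 * τ)) ∂μ)
      atTop (nhds ν) := by
  have hπ : 0 < π := Real.pi_pos
  have hΓ : 0 < Real.Gamma ((n:ℝ)/2 + 1) := Real.Gamma_pos_of_pos (by positivity)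
  have hω0 : 0 < ω := by rw [hω]; positivity
  by_cases hfin : ∀ r : ℝ, μ (ball p r) ≠ ⊤
  · -- all balls have finite measure
    set Vf : ℝ → ℝ := fun r => (μ (ball p r)).toReal / (ω * r^n) with hVf
    have hV1 : ∀ u : ℝ, 0 < u → Vf u ≤ 1 := by
      intro u hu
      refine ge_of_tendsto (hsmallScale p) ?_
      filter_upwards [Ioc_mem_nhdsGT_of_mem (Set.left_mem_Ico.mpr hu)] with s hs
      exact hRicciNonnegBG p (mem_Ioi.mpr hs.1) (mem_Ioi.mpr hu) hs.2
    have hVnn : ∀ u : ℝ, 0 < u → 0 ≤ Vf u := by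
      intro u hu
      apply div_nonneg ENNReal.toReal_nonneg
      positivity
    have hbound : ∀ u : ℝ, 0 < u → (μ (ball p u)).toReal ≤ ω * u^n := by
      intro u hu
      have h := hV1 u hu
      rwa [hVf, div_le_one (by positivity)] at h
    set C : ℝ := 2^(n+1) * ω * (4*π) ^ (-(n:ℝ)/2) with hC
    have hCpos : 0 < C := by
      rw [hC]
      have : (0:ℝ) < (4*π) ^ (-(n:ℝ)/2) := Real.rpow_pos_of_pos (by positivity) _
      positivity
    -- the rescaled form
    have hkey : ∀ τ : ℝ, 1 ≤ τ →
        (∫ x, (4 * π * τ) ^ (-(n:ℝ)/2) * Real.exp (-(dist x p)^2 / (4 * τ)) ∂μ)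
          = ∫ v in Ioi (0:ℝ), Vf (2*Real.sqrt τ*v) * (C * (v^(n+1) * Real.exp (-v^2))) := by
      intro τ hτ
      have hτ0 : 0 < τ := lt_of_lt_of_le one_pos hτ
      rw [MeasureTheory.integral_const_mul, rescaled_identity μ p hτ0 hfin hω0 n hbound]
    -- measurability of Vf
    have hFmono : Monotone (fun r => (μ (ball p r)).toReal) := fun a b hab =>
      ENNReal.toReal_mono (hfin b) (measure_mono (ball_subset_ball hab))
    have hVmeas : Measurable Vf := by
      apply hFmono.measurable.div
      exact (continuous_const.mul (continuous_pow n)).measurable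
    -- dominated convergence
    have hDCT : Tendsto
        (fun τ : ℝ => ∫ v in Ioi (0:ℝ), Vf (2*Real.sqrt τ*v) * (C * (v^(n+1) * Real.exp (-v^2))))
        atTop (nhds (∫ v in Ioi (0:ℝ), ν * (C * (v^(n+1) * Real.exp (-v^2))))) := by
      apply MeasureTheory.tendsto_integral_filter_of_dominated_convergence
        (bound := fun v => C * (v^(n+1) * Real.exp (-v^2)))
      · apply Filter.Eventually.of_forall
        intro τ
        apply Measurable.aestronglyMeasurable
        apply Measurable.mul
        · exact hVmeas.comp (measurable_const.mul measurable_id)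
        · exact (continuous_const.mul ((continuous_pow (n+1)).mul
            (Real.continuous_exp.comp (continuous_pow 2).neg))).measurable
      · filter_upwards [eventually_ge_atTop (1:ℝ)] with τ hτ
        have hτ0 : 0 < τ := lt_of_lt_of_le one_pos hτ
        filter_upwards [ae_restrict_mem measurableSet_Ioi] with v (hv : 0 < v)
        have hbv : 0 < 2*Real.sqrt τ*v := by
          have := Real.sqrt_pos.mpr hτ0
          positivity
        have h1 : 0 ≤ Vf (2*Real.sqrt τ*v) := hVnn _ hbv
        have h2 : Vf (2*Real.sqrt τ*v) ≤ 1 := hV1 _ hbv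
        have hB : 0 ≤ C * (v^(n+1) * Real.exp (-v^2)) := by positivity
        rw [Real.norm_of_nonneg (mul_nonneg h1 hB)]
        nlinarith
      · -- integrability of the bound
        have hs : (-1:ℝ) < (n:ℝ)+1 := by
          have : (0:ℝ) ≤ (n:ℝ) := Nat.cast_nonneg n
          linarith
        have hint := (integrableOn_rpow_mul_exp_neg_mul_sq one_pos hs).const_mul C
        apply MeasureTheory.IntegrableOn.congr_fun hint ?_ measurableSet_Ioi
        intro v (hv : 0 < v)
        show C * (v ^ ((n:ℝ)+1) * Real.exp (-1*v^2)) = C * (v^(n+1) * Real.exp (-v^2))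
        rw [show ((n:ℝ)+1) = ((n+1 : ℕ) : ℝ) by push_cast; ring, Real.rpow_natCast]
        norm_num
      · filter_upwards [ae_restrict_mem measurableSet_Ioi] with v (hv : 0 < v)
        have hsqrt : Tendsto Real.sqrt atTop atTop :=
          (tendsto_rpow_atTop one_half_pos).congr (fun x => (Real.sqrt_eq_rpow x).symm)
        have htend : Tendsto (fun τ : ℝ => 2*Real.sqrt τ*v) atTop atTop := by
          apply Filter.Tendsto.atTop_mul_const hv
          exact hsqrt.const_mul_atTop two_pos
        exact (hν.comp htend).mul_const _
    have hval : (∫ v in Ioi (0:ℝ), ν * (C * (v^(n+1) * Real.exp (-v^2)))) = ν := by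
      rw [MeasureTheory.integral_const_mul, MeasureTheory.integral_const_mul, gamma_value n, hC,
        const_value n hω0 hω, mul_one]
    rw [← hval]
    apply Filter.Tendsto.congr' ?_ hDCT
    filter_upwards [eventually_ge_atTop (1:ℝ)] with τ hτ
    exact (hkey τ hτ).symm
  · -- some ball has infinite measure
    push_neg at hfin
    obtain ⟨r, hr⟩ := hfin
    have hν0 : ν = 0 := by
      have hev : (fun s => (μ (ball p s)).toReal / (ω * s^n)) =ᶠ[atTop] (fun _ => (0:ℝ)) := by
        filter_upwards [eventually_ge_atTop r] with s hs
        have : μ (ball p s) = ⊤ := eq_top_mono (measure_mono (ball_subset_ball hs)) hr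
        simp [this]
      exact tendsto_nhds_unique (hν.congr' hev) tendsto_const_nhds
    rw [hν0]
    apply Filter.Tendsto.congr' ?_ (tendsto_const_nhds (α := ℝ) (f := atTop))
    filter_upwards [eventually_ge_atTop (1:ℝ)] with τ hτ
    have hτ0 : 0 < τ := lt_of_lt_of_le one_pos hτ
    have hc : 0 < (4*π*τ) ^ (-(n:ℝ)/2) := Real.rpow_pos_of_pos (by positivity) _
    symm
    apply MeasureTheory.integral_undef
    intro hInt
    set R : ℝ := |r| + 1 with hR
    have hrR : r ≤ R := by
      rw [hR]
      have := le_abs_self r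
      linarith
    have hε : 0 < (4*π*τ) ^ (-(n:ℝ)/2) * Real.exp (-R^2/(4*τ)) := by positivity
    have hsub : ball p r ⊆
        {x : M | (4*π*τ) ^ (-(n:ℝ)/2) * Real.exp (-R^2/(4*τ))
          ≤ (4*π*τ) ^ (-(n:ℝ)/2) * Real.exp (-(dist x p)^2/(4*τ))} := by
      intro x hx
      simp only [mem_setOf_eq]
      apply mul_le_mul_of_nonneg_left _ hc.le
      apply Real.exp_le_exp.mpr
      have hd : 0 ≤ dist x p := dist_nonneg
      have hxr : dist x p < r := mem_ball.mp hx
      have h4 : (0:ℝ) < 4*τ := by positivity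
      rw [div_le_div_iff_of_pos_right h4]
      nlinarith
    have := lt_of_le_of_lt (measure_mono hsub) (hInt.measure_ge_lt_top hε)
    rw [hr] at this
    exact absurd this (lt_irrefl _)
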